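/- Let k be a field of characteristic zero, A = A₀ ⊕ A₁ a graded involutive algebra over k with involution τ, and E = E₀ ⊕ E₁ a graded Hermitian A-module with form ⟨·,·⟩_E : E × E → A. Let ε : E → E be the k-linear grading involution (identity on E₀, −identity on E₁). Let B be a commutative k-subalgebra of End_A(E) containing the scalar action of A, such that B = B₀ ⊕ B₁ where Bᵢ := {b ∈ B : b(Eⱼ) ⊆ E_{i+j} for all j ∈ ℤ/2ℤ}, and such that the trace form (b, b') ↦ tr_{B/k}(b·b') on B is non-degenerate, where tr_{B/k}(x) denotes the trace of the k-linear map y ↦ x·y on B (and tr_{A/k} is defined analogously on A). Suppose h : E × E → B is a map satisfying tr_{B/k}(b · h(u,v)) = tr_{A/k}(⟨b(u), v⟩_E) for all b ∈ B and u, v ∈ E. Then h(u, v) ∈ B_{i+j} whenever u ∈ Eᵢ and v ∈ Eⱼ. -/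

import Mathlib

set_option synthInstance.maxHeartbeats 400000
set_option maxHeartbeats 1000000

/-!
Lemma `hgd` of the paper: given a graded Hermitian `A`-module `E` and a
commutative subalgebra `B` of `End_A(E)` containing the scalar action of `A`,
graded by `Bᵢ = {b ∈ B : b(Eⱼ) ⊆ E_{i+j}}`, with non-degenerate trace form,
any map `h : E × E → B` satisfying `tr_{B/k}(b · h(u,v)) = tr_{A/k}(⟨b(u), v⟩_E)`
respects the grading: `h(u,v) ∈ B_{i+j}` whenever `u ∈ Eᵢ` and `v ∈ Eⱼ`.
-/

/-- A (ℤ/2ℤ-)graded algebra over `k`. -/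
structure GradedAlgebraStruct (k A : Type*) [CommSemiring k] [CommRing A] [Algebra k A] where
  deg : ZMod 2 → Submodule k A
  one_mem : (1 : A) ∈ deg 0
  mul_mem : ∀ i j : ZMod 2, ∀ a ∈ deg i, ∀ b ∈ deg j, a * b ∈ deg (i + j)
  isCompl_deg : IsCompl (deg 0) (deg 1)

/-- A graded involutive algebra over `k`: a graded algebra with an involutive
`k`-algebra automorphism preserving the grading. -/
structure GradedInvAlgebraStruct (k A : Type*) [CommSemiring k] [CommRing A] [Algebra k A]
    extends GradedAlgebraStruct k A where
  τ : A ≃ₐ[k] A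
  τ_invol : ∀ a : A, τ (τ a) = a
  τ_deg : ∀ i : ZMod 2, ∀ a ∈ deg i, τ a ∈ deg i

/-- A graded Hermitian `A`-module: a graded `A`-module together with a
non-degenerate `k`-bilinear Hermitian form `E × E → A` compatible with the
gradings. -/
structure GradedHermitianModuleStruct (k A : Type*) [CommSemiring k] [CommRing A] [Algebra k A]
    (G : GradedInvAlgebraStruct k A)
    (E : Type*) [AddCommGroup E] [Module A E] [Module k E] [IsScalarTower k A E] where
  deg : ZMod 2 → Submodule k E
  smul_mem : ∀ i j : ZMod 2, ∀ a ∈ G.deg i, ∀ e ∈ deg j, a • e ∈ deg (i + j)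
  isCompl_deg : IsCompl (deg 0) (deg 1)
  form : E →ₗ[k] E →ₗ[k] A
  form_symm : ∀ u v : E, form u v = G.τ (form v u)
  form_smul : ∀ (a : A) (u v : E), form (a • u) v = a * form u v
  form_nondegen : ∀ u : E, (∀ v : E, form u v = 0) → u = 0
  form_deg : ∀ i j : ZMod 2, ∀ u ∈ deg i, ∀ v ∈ deg j, form u v ∈ G.deg (i + j)

lemma trace_eq_zero_of_swap {k V : Type*} [Field k] [CharZero k] [AddCommGroup V] [Module k V]
    (U W : Submodule k V) (hc : IsCompl U W) (f : V →ₗ[k] V)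
    (hUW : ∀ x ∈ U, f x ∈ W) (hWU : ∀ x ∈ W, f x ∈ U) :
    LinearMap.trace k V f = 0 := by
  set π : V →ₗ[k] V := U.subtype ∘ₗ (U.linearProjOfIsCompl W hc) with hπ
  set σ : V →ₗ[k] V := 2 • π - LinearMap.id with hσ
  have hσU : ∀ x ∈ U, σ x = x := by
    intro x hx
    have hp : ((U.linearProjOfIsCompl W hc x : U) : V) = x :=
      congrArg Subtype.val (Submodule.linearProjOfIsCompl_apply_left hc ⟨x, hx⟩)
    simp [hσ, hπ, Submodule.linearProjOfIsCompl_apply_left hc ⟨x, hx⟩, two_smul]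
    rw [hp]; abel
  have hσW : ∀ x ∈ W, σ x = -x := by
    intro x hx
    have hp : ((U.linearProjOfIsCompl W hc x : U) : V) = 0 :=
      congrArg Subtype.val (Submodule.linearProjOfIsCompl_apply_right hc ⟨x, hx⟩)
    simp [hσ, hπ, Submodule.linearProjOfIsCompl_apply_right hc ⟨x, hx⟩]
    rw [hp, smul_zero]
  have hdecomp : ∀ x : V, ∃ u ∈ U, ∃ w ∈ W, x = u + w := by
    intro x
    have : x ∈ U ⊔ W := by rw [hc.codisjoint.eq_top]; trivial
    rcases Submodule.mem_sup.mp this with ⟨u, hu, w, hw, hx⟩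
    exact ⟨u, hu, w, hw, hx.symm⟩
  have hσσ : σ * σ = 1 := by
    apply LinearMap.ext; intro x
    rcases hdecomp x with ⟨u, hu, w, hw, rfl⟩
    have h1 : σ (u + w) = u - w := by rw [map_add, hσU u hu, hσW w hw]; abel
    simp only [Module.End.mul_apply, h1, Module.End.one_apply]
    rw [map_sub, hσU u hu, hσW w hw]; abel
  have hconj : σ * (f * σ) = -f := by
    apply LinearMap.ext; intro x
    rcases hdecomp x with ⟨u, hu, w, hw, rfl⟩
    have h1 : σ (u + w) = u - w := by rw [map_add, hσU u hu, hσW w hw]; abel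
    simp only [Module.End.mul_apply, h1, LinearMap.neg_apply]
    rw [map_sub, map_sub, map_add, hσW _ (hUW u hu), hσU _ (hWU w hw)]
    abel
  have h2 : LinearMap.trace k V (σ * (f * σ)) = LinearMap.trace k V f := by
    rw [LinearMap.trace_mul_comm, mul_assoc, hσσ, mul_one]
  rw [hconj] at h2
  simp only [map_neg] at h2
  have h3 : (2:k) * LinearMap.trace k V f = 0 := by linear_combination -h2
  simpa using h3

/-- The degree-`p` part of a subalgebra `B` of `End_A(E)`. -/
def BsubDeg {k A E : Type*} [CommSemiring k] [CommRing A] [Algebra k A]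
    [AddCommGroup E] [Module A E] [Module k E] [IsScalarTower k A E]
    {G : GradedInvAlgebraStruct k A} (M : GradedHermitianModuleStruct k A G E)
    (B : Subalgebra k (Module.End A E)) (p : ZMod 2) : Submodule k ↥B where
  carrier := {b : ↥B | ∀ j : ZMod 2, ∀ e ∈ M.deg j, (b : Module.End A E) e ∈ M.deg (p + j)}
  add_mem' := by
    intro x y hx hy j e he
    have : ((x + y : ↥B) : Module.End A E) e = (x : Module.End A E) e + (y : Module.End A E) e := rfl
    rw [this]
    exact Submodule.add_mem _ (hx j e he) (hy j e he)
  zero_mem' := by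
    intro j e he
    have : ((0 : ↥B) : Module.End A E) e = 0 := rfl
    rw [this]; exact Submodule.zero_mem _
  smul_mem' := by
    intro r x hx j e he
    have : ((r • x : ↥B) : Module.End A E) e = r • ((x : Module.End A E) e) := rfl
    rw [this]
    exact Submodule.smul_mem _ r (hx j e he)

lemma BsubDeg_mul {k A E : Type*} [CommSemiring k] [CommRing A] [Algebra k A]
    [AddCommGroup E] [Module A E] [Module k E] [IsScalarTower k A E]
    {G : GradedInvAlgebraStruct k A} (M : GradedHermitianModuleStruct k A G E)
    (B : Subalgebra k (Module.End A E)) {p q : ZMod 2} {x y : ↥B}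
    (hx : x ∈ BsubDeg M B p) (hy : y ∈ BsubDeg M B q) : x * y ∈ BsubDeg M B (p + q) := by
  intro j e he
  have h1 : ((x * y : ↥B) : Module.End A E) e = (x : Module.End A E) ((y : Module.End A E) e) := rfl
  rw [h1, add_assoc]
  exact hx (q + j) _ (hy j e he)

theorem hermitian_descent_form_respects_grading
    {k A E : Type*} [Field k] [CharZero k]
    [CommRing A] [Algebra k A] [FiniteDimensional k A] [IsSemisimpleRing A]
    [AddCommGroup E] [Module A E] [Module k E] [IsScalarTower k A E] [Module.Finite A E]
    (G : GradedInvAlgebraStruct k A)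
    (M : GradedHermitianModuleStruct k A G E)
    (B : Subalgebra k (Module.End A E))
    (hBcomm : ∀ x y : ↥B, x * y = y * x)
    (hBscalar : ∀ a : A, algebraMap A (Module.End A E) a ∈ B)
    (hBdecomp : ∀ b : ↥B, ∃ b₀ b₁ : ↥B, b = b₀ + b₁ ∧
      (∀ j : ZMod 2, ∀ e ∈ M.deg j, (b₀ : Module.End A E) e ∈ M.deg (0 + j)) ∧
      (∀ j : ZMod 2, ∀ e ∈ M.deg j, (b₁ : Module.End A E) e ∈ M.deg (1 + j)))
    (hBdisj : ∀ b : ↥B,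
      (∀ j : ZMod 2, ∀ e ∈ M.deg j, (b : Module.End A E) e ∈ M.deg (0 + j)) →
      (∀ j : ZMod 2, ∀ e ∈ M.deg j, (b : Module.End A E) e ∈ M.deg (1 + j)) → b = 0)
    (hBtrace : ∀ x : ↥B,
      (∀ y : ↥B, LinearMap.trace k ↥B (LinearMap.mulLeft k (x * y)) = 0) → x = 0)
    (h : E × E → ↥B)
    (hh : ∀ (b : ↥B) (u v : E),
      LinearMap.trace k ↥B (LinearMap.mulLeft k (b * h (u, v))) =
        LinearMap.trace k A (LinearMap.mulLeft k (M.form ((b : Module.End A E) u) v))) :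
    ∀ i j : ZMod 2, ∀ u ∈ M.deg i, ∀ v ∈ M.deg j,
      ∀ j' : ZMod 2, ∀ e ∈ M.deg j',
        (((h (u, v) : Module.End A E)) e) ∈ M.deg ((i + j) + j') := by
  -- ZMod 2 arithmetic helpers
  have hZadd : ∀ t : ZMod 2, t + t = 0 := by decide
  have hZ01 : ∀ t : ZMod 2, t = 0 ∨ t = 1 := by decide
  -- grading of B
  have hcompl : IsCompl (BsubDeg M B 0) (BsubDeg M B 1) := by
    constructor
    · rw [Submodule.disjoint_def]
      intro b hb0 hb1
      exact hBdisj b hb0 hb1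
    · rw [codisjoint_iff, eq_top_iff]
      intro b _
      obtain ⟨b₀, b₁, heq, h₀, h₁⟩ := hBdecomp b
      exact Submodule.mem_sup.mpr ⟨b₀, h₀, b₁, h₁, heq.symm⟩
  have mulLeft_addB : ∀ x y : ↥B,
      LinearMap.mulLeft k (x + y) = LinearMap.mulLeft k x + LinearMap.mulLeft k y := by
    intro x y; ext z; simp [add_mul]
  -- traces of odd elements vanish
  have traceA_odd : ∀ a : A, a ∈ G.deg 1 →
      LinearMap.trace k A (LinearMap.mulLeft k a) = 0 := by
    intro a ha
    apply trace_eq_zero_of_swap (G.deg 0) (G.deg 1) G.isCompl_deg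
    · intro x hx
      have := G.mul_mem 1 0 a ha x hx
      rwa [show (1 + 0 : ZMod 2) = 1 by decide] at this
    · intro x hx
      have := G.mul_mem 1 1 a ha x hx
      rwa [show (1 + 1 : ZMod 2) = 0 by decide] at this
  have traceB_odd : ∀ c : ↥B, c ∈ BsubDeg M B 1 →
      LinearMap.trace k ↥B (LinearMap.mulLeft k c) = 0 := by
    intro c hc
    apply trace_eq_zero_of_swap (BsubDeg M B 0) (BsubDeg M B 1) hcompl
    · intro x hx
      have := BsubDeg_mul M B hc hx
      rwa [show (1 + 0 : ZMod 2) = 1 by decide] at this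
    · intro x hx
      have := BsubDeg_mul M B hc hx
      rwa [show (1 + 1 : ZMod 2) = 0 by decide] at this
  intro i j u hu v hv
  set s : ZMod 2 := i + j with hs
  suffices hmem : h (u, v) ∈ BsubDeg M B s by
    intro j' e he
    exact hmem j' e he
  obtain ⟨b₀, b₁, heq, h₀, h₁⟩ := hBdecomp (h (u, v))
  have key : ∀ c g : ↥B, c ∈ BsubDeg M B (1 + s) → g ∈ BsubDeg M B s →
      h (u, v) = g + c → c = 0 := by
    intro c g hc hg hsum
    -- trace against elements of parity 1+s
    have main : ∀ y' : ↥B, y' ∈ BsubDeg M B (1 + s) →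
        LinearMap.trace k ↥B (LinearMap.mulLeft k (c * y')) = 0 := by
      intro y' hy'
      have e1 : (1 + s) + s = 1 := by rw [add_assoc, hZadd, add_zero]
      have hgprod : y' * g ∈ BsubDeg M B 1 := by
        have := BsubDeg_mul M B hy' hg
        rwa [e1] at this
      have hform : M.form ((y' : Module.End A E) u) v ∈ G.deg 1 := by
        have := M.form_deg ((1 + s) + i) j _ (hy' i u hu) v hv
        rwa [show ((1 + s) + i) + j = 1 by
          rw [add_assoc, add_assoc, ← hs, hZadd, add_zero]] at this
      have hsplit : y' * h (u, v) = y' * g + y' * c := by rw [hsum, mul_add]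
      have htr : LinearMap.trace k ↥B (LinearMap.mulLeft k (y' * h (u, v))) =
          LinearMap.trace k ↥B (LinearMap.mulLeft k (y' * g)) +
          LinearMap.trace k ↥B (LinearMap.mulLeft k (y' * c)) := by
        rw [hsplit, mulLeft_addB, map_add]
      rw [hBcomm c y']
      have h4 := hh y' u v
      rw [htr, traceB_odd _ hgprod, zero_add] at h4
      rw [h4]
      exact traceA_odd _ hform
    have aux : ∀ y'' : ↥B, y'' ∈ BsubDeg M B s →
        LinearMap.trace k ↥B (LinearMap.mulLeft k (c * y'')) = 0 := by
      intro y'' hy''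
      apply traceB_odd
      have := BsubDeg_mul M B hc hy''
      rwa [show (1 + s) + s = 1 by rw [add_assoc, hZadd, add_zero]] at this
    apply hBtrace
    intro y
    obtain ⟨y₀, y₁, hyeq, hy₀, hy₁⟩ := hBdecomp y
    have hsplit2 : c * y = c * y₀ + c * y₁ := by rw [hyeq, mul_add]
    rw [hsplit2, mulLeft_addB, map_add]
    rcases hZ01 s with hs0 | hs1
    · rw [aux y₀ (by rw [hs0]; exact hy₀), main y₁ (by rw [hs0]; exact hy₁), add_zero]
    · rw [main y₀ (by rw [hs1, show (1+1 : ZMod 2) = 0 by decide]; exact hy₀),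
        aux y₁ (by rw [hs1]; exact hy₁), add_zero]
  rcases hZ01 s with hs0 | hs1
  · have hb1 : b₁ = 0 := key b₁ b₀ (by rw [hs0, show (1+0 : ZMod 2) = 1 by decide]; exact h₁)
      (by rw [hs0]; exact h₀) heq
    rw [heq, hb1, add_zero, hs0]
    exact h₀
  · have hb0 : b₀ = 0 := key b₀ b₁ (by rw [hs1, show (1+1 : ZMod 2) = 0 by decide]; exact h₀)
      (by rw [hs1]; exact h₁) (by rw [heq, add_comm])
    rw [heq, hb0, zero_add, hs1]
    exact h₁
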